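/- arXiv:2401.10538 — 3 statements merged into one kernel-verified Lean document; each statement's English description precedes it below -/
import Mathlib

section
/- Let G = (V, E) be a finite simple graph admitting an acyclic orientation μ in which every vertex has outdegree at most k. Then E can be partitioned into k pairwise disjoint sets F_1, …, F_k such that each spanning subgraph (V, F_j) is a forest (contains no cycle); consequently, |E(G[S])| ≤ k·(|S| − 1) for every subset S ⊆ V with |S| ≥ 2, i.e., G has arboricity at most k. -/
open SimpleGraph

open SimpleGraph

private lemma transGen_to_list {α : Type*} {R : α → α → Prop} {a b : α}
    (h : Relation.TransGen R a b) :
    ∃ l : List α, ∃ hl : 2 ≤ l.length, l[0]'(by omega) = a ∧ l[l.length - 1]'(by omega) = b ∧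
      ∀ i (hi : i + 1 < l.length), R (l[i]'(by omega)) (l[i+1]'(by omega)) := by
  induction h with
  | single hab =>
      refine ⟨[a, _], by simp, rfl, rfl, ?_⟩
      intro i hi
      have : i = 0 := by simp at hi; omega
      subst this
      simpa using hab
  | tail hab hbc ih =>
      rename_i b' c'
      obtain ⟨l, hl, h0, hlast, hch⟩ := ih
      refine ⟨l ++ [c'], ?_, ?_, ?_, ?_⟩
      · simpa using by omega
      · rw [List.getElem_append_left (by omega)]; exact h0
      · exact List.getElem_concat_length (by simp) _
      · intro i hi
        simp only [List.length_append, List.length_singleton] at hi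
        rcases lt_or_eq_of_le (Nat.lt_succ_iff.mp hi) with h' | h'
        · rw [List.getElem_append_left (by omega), List.getElem_append_left (by omega)]
          exact hch i h'
        · have hi0 : i = l.length - 1 := by omega
          subst hi0
          rw [List.getElem_append_left (by omega),
            List.getElem_concat_length (l := l) (a := c') (by omega) _, hlast]
          exact hbc
open SimpleGraph

private lemma isAcyclic_of_rank {V : Type*} (H : SimpleGraph V) (r : V → ℕ) (hd : Sym2 V → V)
    (hmem : ∀ e ∈ H.edgeSet, hd e ∈ e)
    (hrank : ∀ e ∈ H.edgeSet, ∀ x ∈ e, x ≠ hd e → r x < r (hd e))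
    (huniq : ∀ e₁ ∈ H.edgeSet, ∀ e₂ ∈ H.edgeSet, hd e₁ = hd e₂ → e₁ = e₂) :
    H.IsAcyclic := by
  classical
  intro v c hc
  obtain ⟨u, hu', hmax'⟩ := Finset.exists_max_image c.support.toFinset r
    ⟨v, by simp [Walk.start_mem_support]⟩
  have hu : u ∈ c.support := by simpa using hu'
  have hmax : ∀ y ∈ c.support, r y ≤ r u := fun y hy => hmax' y (by simpa using hy)
  set c' : H.Walk u u := c.rotate u hu with hc'def
  have hc' : c'.IsCycle := hc.rotate hu
  have hsupp : ∀ y ∈ c'.support, y ∈ c.support := by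
    intro y hy
    rw [Walk.support_eq_cons] at hy
    rcases List.mem_cons.mp hy with h | h
    · exact h ▸ hu
    · have := (Walk.support_rotate c u hu).mem_iff.mp h
      rw [Walk.support_eq_cons] at hu ⊢
      exact List.mem_cons_of_mem _ this
  obtain ⟨x, hux, p, hcp⟩ := Walk.not_nil_iff.mp hc'.not_nil
  have hrevnil : ¬ c'.reverse.Nil := by
    rw [Walk.nil_iff_length_eq, Walk.length_reverse]
    have := hc'.three_le_length; omega
  obtain ⟨w, huw, q, hrq⟩ := Walk.not_nil_iff.mp hrevnil
  have he1 : s(u, x) ∈ H.edgeSet := hux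
  have he2 : s(u, w) ∈ H.edgeSet := huw
  have hxs : x ∈ c'.support := by rw [hcp]; simp [Walk.start_mem_support]
  have hws : w ∈ c'.support := by
    have : w ∈ c'.reverse.support := by rw [hrq]; simp [Walk.start_mem_support]
    rwa [Walk.support_reverse, List.mem_reverse] at this
  have hhead : ∀ z, s(u, z) ∈ H.edgeSet → z ∈ c'.support → hd s(u, z) = u := by
    intro z hz hzs
    rcases Sym2.mem_iff.mp (hmem _ hz) with h | h
    · exact h
    · exfalso
      have hne : u ≠ z := (H.mem_edgeSet.mp hz).ne
      have h1 : r u < r (hd s(u, z)) := hrank _ hz u (Sym2.mem_mk_left u z) (by rw [h]; exact hne)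
      rw [h] at h1
      exact absurd (hmax z (hsupp z hzs)) (not_le.mpr h1)
  have heq : s(u, x) = s(u, w) :=
    huniq _ he1 _ he2 (by rw [hhead x he1 hxs, hhead w he2 hws])
  have hxw : x = w := Sym2.congr_right.mp heq
  -- now derive contradiction with nodup edges
  have hnodup : c'.edges.Nodup := hc'.edges_nodup
  have hrev : c'.reverse.edges = c'.edges.reverse := Walk.edges_reverse c'
  rw [hrq, hcp] at hrev
  simp only [Walk.edges_cons] at hrev
  -- hrev : s(u,w) :: q.edges = (s(u,x) :: p.edges).reverse = p.edges.reverse ++ [s(u,x)]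
  rw [List.reverse_cons] at hrev
  have hplen : 2 ≤ p.edges.length := by
    have h3 := hc'.three_le_length
    rw [hcp] at h3
    simp only [Walk.length_cons] at h3
    rw [Walk.length_edges]; omega
  obtain ⟨b, t, hbt⟩ := List.exists_cons_of_ne_nil
    (show p.edges.reverse ≠ [] by simp; intro h; rw [Walk.length_edges, Walk.nil_iff_length_eq.mp h] at hplen; simp at hplen)
  rw [hbt] at hrev
  have hb : b = s(u, w) := by
    have := congrArg List.head? hrev
    simpa using this.symm
  have hmem' : s(u, x) ∈ p.edges := by
    rw [← List.mem_reverse, hbt, hb, hxw]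
    exact List.mem_cons_self
  rw [hcp] at hnodup
  simp only [Walk.edges_cons, List.nodup_cons] at hnodup
  exact hnodup.1 hmem'



/-- if `G` admits an acyclic orientation with outdegrees at most `k`, then its
edge set can be partitioned into `k` forests; consequently, `G` has arboricity at most `k`. -/
theorem forests_decomposition_of_acyclic_orientation {V : Type*} [Fintype V] [DecidableEq V]
    (G : SimpleGraph V) [DecidableRel G.Adj] (k : ℕ) (μ : Sym2 V → V × V)
    (hμ : ∀ e ∈ G.edgeSet, Sym2.mk (μ e).1 (μ e).2 = e)
    (hout : ∀ v : V, (G.edgeFinset.filter (fun e => (μ e).1 = v)).card ≤ k)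
    (hacyc : ¬ ∃ (n : ℕ) (c : Fin (n + 1) → V), 0 < n ∧ c 0 = c (Fin.last n) ∧
        ∀ i : Fin n, G.Adj (c i.castSucc) (c i.succ) ∧
          μ s(c i.castSucc, c i.succ) = (c i.castSucc, c i.succ)) :
    (∃ F : Fin k → Finset (Sym2 V),
      (∀ j l, j ≠ l → Disjoint (F j) (F l)) ∧
      Finset.univ.biUnion F = G.edgeFinset ∧
      ∀ j, (SimpleGraph.fromEdgeSet ((F j : Set (Sym2 V)))).IsAcyclic) ∧
    ∀ S : Finset V, 2 ≤ S.card →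
      (G.edgeFinset.filter (fun e => ∀ v ∈ e, v ∈ S)).card ≤ k * (S.card - 1) := by
  classical
  set R : V → V → Prop := fun a b => G.Adj a b ∧ μ s(a, b) = (a, b) with hRdef
  -- irreflexivity of the transitive closure
  have hirr : ∀ a, ¬ Relation.TransGen R a a := by
    intro a hta
    obtain ⟨l, hl, h0, hlast, hch⟩ := transGen_to_list hta
    apply hacyc
    refine ⟨l.length - 1, fun i => l[(i : ℕ)]'(by omega), by omega, ?_, ?_⟩
    · have h1 : ((0 : Fin (l.length - 1 + 1)) : ℕ) = 0 := rfl
      have h2 : ((Fin.last (l.length - 1)) : ℕ) = l.length - 1 := rfl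
      simp only [h1, h2]
      rw [h0, hlast]
    · intro i
      have hi : (i : ℕ) + 1 < l.length := by omega
      have hcs : ((i.castSucc : Fin (l.length - 1 + 1)) : ℕ) = (i : ℕ) := rfl
      have hsc : ((i.succ : Fin (l.length - 1 + 1)) : ℕ) = (i : ℕ) + 1 := rfl
      simp only [hcs, hsc]
      exact hch i hi
  -- the rank function
  set r : V → ℕ := fun v => (Finset.univ.filter (fun u => Relation.TransGen R v u)).card
    with hrdef
  have hRe : ∀ e ∈ G.edgeSet, R (μ e).1 (μ e).2 := by
    intro e he
    have hmk : Sym2.mk (μ e).1 (μ e).2 = s((μ e).1, (μ e).2) := rfl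
    constructor
    · rw [← mem_edgeSet, ← hmk, hμ e he]; exact he
    · rw [← hmk, hμ e he]
  have hrr : ∀ e ∈ G.edgeSet, r (μ e).2 < r (μ e).1 := by
    intro e he
    apply Finset.card_lt_card
    rw [Finset.ssubset_iff_of_subset]
    · refine ⟨(μ e).2, Finset.mem_filter.mpr ⟨Finset.mem_univ _,
        Relation.TransGen.single (hRe e he)⟩, fun hmem => ?_⟩
      exact hirr _ (Finset.mem_filter.mp hmem).2
    · intro u hu
      rw [Finset.mem_filter] at hu ⊢
      exact ⟨hu.1, Relation.TransGen.head (hRe e he) hu.2⟩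
  -- head of an edge belongs to the edge
  have hmem1 : ∀ e ∈ G.edgeSet, (μ e).1 ∈ e := by
    intro e he
    have h1 : (μ e).1 ∈ Sym2.mk (μ e).1 (μ e).2 := Sym2.mem_mk_left _ _
    rwa [hμ e he] at h1
  have hmem2 : ∀ e ∈ G.edgeSet, (μ e).2 ∈ e := by
    intro e he
    have h1 : (μ e).2 ∈ Sym2.mk (μ e).1 (μ e).2 := Sym2.mem_mk_right _ _
    rwa [hμ e he] at h1
  have hother : ∀ e ∈ G.edgeSet, ∀ x ∈ e, x ≠ (μ e).1 → x = (μ e).2 := by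
    intro e he x hx hne
    rw [← hμ e he] at hx
    rcases Sym2.mem_iff.mp hx with h | h
    · exact absurd h hne
    · exact h
  -- index assignment
  set A : V → Finset (Sym2 V) := fun v => G.edgeFinset.filter (fun e => (μ e).1 = v) with hAdef
  set idx : Sym2 V → ℕ := fun e => (A ((μ e).1)).toList.idxOf e with hidxdef
  have hmemA : ∀ e ∈ G.edgeFinset, e ∈ A ((μ e).1) := by
    intro e he
    exact Finset.mem_filter.mpr ⟨he, rfl⟩
  have hidx_lt : ∀ e ∈ G.edgeFinset, idx e < k := by
    intro e he
    have h1 : idx e < (A ((μ e).1)).toList.length :=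
      List.idxOf_lt_length_iff.mpr (Finset.mem_toList.mpr (hmemA e he))
    rw [Finset.length_toList] at h1
    exact h1.trans_le (hout _)
  set F : Fin k → Finset (Sym2 V) :=
    fun j => G.edgeFinset.filter (fun e => idx e = (j : ℕ)) with hFdef
  have hFsub : ∀ j, F j ⊆ G.edgeFinset := fun j => Finset.filter_subset _ _
  have hFuniq : ∀ (j : Fin k), ∀ e₁ ∈ F j, ∀ e₂ ∈ F j, (μ e₁).1 = (μ e₂).1 → e₁ = e₂ := by
    intro j e₁ h₁ e₂ h₂ hh
    rw [Finset.mem_filter] at h₁ h₂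
    have hm₁ : e₁ ∈ (A ((μ e₁).1)).toList := Finset.mem_toList.mpr (hmemA _ h₁.1)
    have hm₂ : e₂ ∈ (A ((μ e₁).1)).toList := by
      rw [hh]; exact Finset.mem_toList.mpr (hmemA _ h₂.1)
    refine (List.idxOf_inj hm₁).mp ?_
    have g2 : idx e₂ = (A ((μ e₁).1)).toList.idxOf e₂ := by rw [hidxdef]; simp only [hh]
    have g1 : idx e₁ = (A ((μ e₁).1)).toList.idxOf e₁ := rfl
    rw [← g1, ← g2, h₁.2, h₂.2]
  constructor
  · refine ⟨F, ?_, ?_, ?_⟩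
    · intro j l hjl
      rw [Finset.disjoint_left]
      intro e he₁ he₂
      rw [Finset.mem_filter] at he₁ he₂
      exact hjl (Fin.ext (he₁.2 ▸ he₂.2))
    · ext e
      simp only [Finset.mem_biUnion, Finset.mem_univ, true_and]
      constructor
      · rintro ⟨j, hj⟩; exact hFsub j hj
      · intro he
        exact ⟨⟨idx e, hidx_lt e he⟩, Finset.mem_filter.mpr ⟨he, rfl⟩⟩
    · intro j
      apply isAcyclic_of_rank _ r (fun e => (μ e).1)
      · intro e he
        rw [edgeSet_fromEdgeSet] at he
        have heG : e ∈ G.edgeSet := mem_edgeFinset.mp (hFsub j he.1)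
        exact hmem1 e heG
      · intro e he x hx hne
        rw [edgeSet_fromEdgeSet] at he
        have heG : e ∈ G.edgeSet := mem_edgeFinset.mp (hFsub j he.1)
        rw [hother e heG x hx hne]
        exact hrr e heG
      · intro e₁ h₁ e₂ h₂ hh
        rw [edgeSet_fromEdgeSet] at h₁ h₂
        exact hFuniq j e₁ h₁.1 e₂ h₂.1 hh
  · intro S hS
    have hSne : S.Nonempty := Finset.card_pos.mp (by omega)
    obtain ⟨v₀, hv₀S, hv₀min⟩ := S.exists_min_image r hSne
    have hsub : G.edgeFinset.filter (fun e => ∀ v ∈ e, v ∈ S) ⊆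
        (S.erase v₀).biUnion (fun v => A v) := by
      intro e he
      rw [Finset.mem_filter] at he
      obtain ⟨heE, heS⟩ := he
      have he' : e ∈ G.edgeSet := mem_edgeFinset.mp heE
      have hne : (μ e).1 ≠ v₀ := by
        intro h
        have h1 : r (μ e).2 < r v₀ := h ▸ hrr e he'
        exact absurd (hv₀min _ (heS _ (hmem2 e he'))) (not_le.mpr h1)
      exact Finset.mem_biUnion.mpr ⟨(μ e).1, Finset.mem_erase.mpr ⟨hne, heS _ (hmem1 e he')⟩,
        Finset.mem_filter.mpr ⟨heE, rfl⟩⟩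
    calc (G.edgeFinset.filter (fun e => ∀ v ∈ e, v ∈ S)).card
        ≤ ((S.erase v₀).biUnion (fun v => A v)).card := Finset.card_le_card hsub
      _ ≤ ∑ v ∈ S.erase v₀, (A v).card := Finset.card_biUnion_le
      _ ≤ (S.erase v₀).card • k := Finset.sum_le_card_nsmul _ _ _ (fun v _ => hout v)
      _ = k * (S.card - 1) := by
          rw [Finset.card_erase_of_mem hv₀S, smul_eq_mul, Nat.mul_comm]
end

section
/- Let G = (V, E) be a finite simple graph with arboricity at most α (i.e., |E(G[S])| ≤ α·(|S| − 1) for every S ⊆ V with |S| ≥ 2), and let i be a natural number with 2^i ≤ α. Then there exists a partition of E into 2^i pairwise disjoint sets E_1, …, E_{2^i} such that each spanning subgraph (V, E_j) has arboricity at most α/2^{i−1} + 1, i.e., |E_j ∩ E(G[S])| ≤ (α/2^{i−1} + 1)·(|S| − 1) for every S ⊆ V with |S| ≥ 2 (inequalities between real numbers). -/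
open Finset

/-- Handshake-type bound: sum of degrees within `T` is at most twice the edge bound. -/
lemma pab_sum_deg_le {V : Type*} [Fintype V] [DecidableEq V]
    (G : SimpleGraph V) [DecidableRel G.Adj] (α : ℕ)
    (harb : ∀ S : Finset V, 2 ≤ S.card →
      (G.edgeFinset.filter (fun e => ∀ v ∈ e, v ∈ S)).card ≤ α * (S.card - 1))
    (T : Finset V) (hT : 2 ≤ T.card) :
    ∑ v ∈ T, (T.filter (G.Adj v)).card ≤ 2 * (α * (T.card - 1)) := by
  classical
  let G' : SimpleGraph V := ⟨fun v w => G.Adj v w ∧ v ∈ T ∧ w ∈ T,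
    by constructor; intro v w h; exact ⟨h.1.symm, h.2.2, h.2.1⟩,
    by constructor; intro v h; exact G.loopless.irrefl v h.1⟩
  have hdec : DecidableRel G'.Adj := fun v w => instDecidableAnd
  have hsum : ∑ v, G'.degree v = 2 * G'.edgeFinset.card :=
    SimpleGraph.sum_degrees_eq_twice_card_edges G'
  have hdeg : ∀ v ∈ T, G'.degree v = (T.filter (G.Adj v)).card := by
    intro v hv
    rw [SimpleGraph.degree]
    congr 1
    ext w
    simp [SimpleGraph.mem_neighborFinset, G', hv]
    tauto
  have hdeg0 : ∀ v ∉ T, G'.degree v = 0 := by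
    intro v hv
    rw [SimpleGraph.degree]
    convert Finset.card_empty
    ext w
    simp [SimpleGraph.mem_neighborFinset, G', hv]
  have hsub : G'.edgeFinset ⊆ G.edgeFinset.filter (fun e => ∀ v ∈ e, v ∈ T) := by
    intro e he
    induction e using Sym2.ind with
    | _ a b =>
      rw [SimpleGraph.mem_edgeFinset, SimpleGraph.mem_edgeSet] at he
      rw [mem_filter, SimpleGraph.mem_edgeFinset, SimpleGraph.mem_edgeSet]
      refine ⟨he.1, ?_⟩
      intro v hv
      rw [Sym2.mem_iff] at hv
      rcases hv with rfl | rfl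
      · exact he.2.1
      · exact he.2.2
  calc ∑ v ∈ T, (T.filter (G.Adj v)).card
      = ∑ v, G'.degree v := by
        rw [← Finset.sum_subset (Finset.subset_univ T)]
        · exact Finset.sum_congr rfl fun v hv => (hdeg v hv).symm
        · intro v _ hv; exact hdeg0 v hv
    _ = 2 * G'.edgeFinset.card := hsum
    _ ≤ 2 * (α * (T.card - 1)) := by
        apply Nat.mul_le_mul_left
        exact le_trans (Finset.card_le_card hsub) (harb T hT)

/-- Degeneracy ordering: an injective labeling such that every vertex has at most
`2α - 1` neighbors with larger label. -/
lemma pab_exists_order {V : Type*} [Fintype V] [DecidableEq V]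
    (G : SimpleGraph V) [DecidableRel G.Adj] (α : ℕ) (hα : 1 ≤ α)
    (hsum : ∀ T : Finset V, 2 ≤ T.card →
      ∑ v ∈ T, (T.filter (G.Adj v)).card ≤ 2 * (α * (T.card - 1))) :
    ∃ f : V → ℕ, Function.Injective f ∧
      ∀ v, ((Finset.univ.filter (fun w => G.Adj v w ∧ f v < f w)).card ≤ 2 * α - 1) := by
  classical
  have hmin : ∀ T : Finset V, T.Nonempty → ∃ v ∈ T, (T.filter (G.Adj v)).card ≤ 2 * α - 1 := by
    intro T hne
    by_contra hcon
    push_neg at hcon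
    have hall : ∀ v ∈ T, 2 * α ≤ (T.filter (G.Adj v)).card := by
      intro v hv; have := hcon v hv; omega
    have hT2 : 2 ≤ T.card := by
      obtain ⟨v, hv⟩ := hne
      have h1 := hall v hv
      have h2 : (T.filter (G.Adj v)).card ≤ (T.erase v).card := by
        apply Finset.card_le_card
        intro w hw
        rw [mem_filter] at hw
        exact Finset.mem_erase.mpr ⟨fun h => G.loopless.irrefl v (h ▸ hw.2), hw.1⟩
      have h3 : (T.erase v).card = T.card - 1 := Finset.card_erase_of_mem hv
      have : 1 ≤ T.card := Finset.card_pos.mpr ⟨v, hv⟩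
      omega
    have h4 := hsum T hT2
    have h5 : T.card * (2 * α) ≤ ∑ v ∈ T, (T.filter (G.Adj v)).card := by
      calc T.card * (2 * α) = ∑ _v ∈ T, 2 * α := by rw [Finset.sum_const, smul_eq_mul]
        _ ≤ _ := Finset.sum_le_sum hall
    have h6 := h5.trans h4
    have h7 : 2 * (α * (T.card - 1)) = (T.card - 1) * (2 * α) := by ring
    have h8 : (T.card - 1) * (2 * α) < T.card * (2 * α) :=
      Nat.mul_lt_mul_of_lt_of_le (by omega) (le_refl _) (by omega)
    omega
  have key : ∀ T : Finset V, ∃ f : V → ℕ, Set.InjOn f T ∧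
      ∀ v ∈ T, ((T.filter (fun w => G.Adj v w ∧ f v < f w)).card ≤ 2 * α - 1) := by
    intro T
    induction T using Finset.strongInduction with
    | _ T ih =>
      rcases T.eq_empty_or_nonempty with rfl | hne
      · exact ⟨fun _ => 0, by simp, by simp⟩
      · obtain ⟨v, hv, hdeg⟩ := hmin T hne
        obtain ⟨f, hinj, hbound⟩ := ih (T.erase v) (Finset.erase_ssubset hv)
        refine ⟨fun w => if w = v then 0 else f w + 1, ?_, ?_⟩
        · intro a ha b hb hab
          simp only at hab
          by_cases h1 : a = v <;> by_cases h2 : b = v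
          · rw [h1, h2]
          · simp [h1, h2] at hab
          · simp [h1, h2] at hab
          · simp only [if_neg h1, if_neg h2] at hab
            exact hinj (Finset.mem_coe.mpr (Finset.mem_erase.mpr ⟨h1, ha⟩))
              (Finset.mem_coe.mpr (Finset.mem_erase.mpr ⟨h2, hb⟩)) (by omega)
        · intro u hu
          by_cases h1 : u = v
          · subst h1
            refine le_trans (Finset.card_le_card ?_) hdeg
            intro w hw
            rw [mem_filter] at hw ⊢
            exact ⟨hw.1, hw.2.1⟩
          · refine le_trans (Finset.card_le_card ?_) (hbound u (Finset.mem_erase.mpr ⟨h1, hu⟩))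
            intro w hw
            simp only [mem_filter, if_neg h1] at hw
            have hwv : w ≠ v := by
              intro h; rw [h, if_pos rfl] at hw; omega
            rw [if_neg hwv] at hw
            rw [mem_filter]
            exact ⟨Finset.mem_erase.mpr ⟨hwv, hw.1⟩, hw.2.1, by omega⟩
  obtain ⟨f, hinj, hbound⟩ := key Finset.univ
  refine ⟨f, fun a b hab => hinj (by simp) (by simp) hab, fun v => hbound v (Finset.mem_univ v)⟩

/-- if `G` has arboricity at most `α` and `2^i ≤ α`, then E can be partitioned
into `2^i` parts each of arboricity at most `α/2^(i-1) + 1`. -/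
theorem partition_arboricity_bound {V : Type*} [Fintype V] [DecidableEq V]
    (G : SimpleGraph V) [DecidableRel G.Adj] (α : ℕ)
    (harb : ∀ S : Finset V, 2 ≤ S.card →
      (G.edgeFinset.filter (fun e => ∀ v ∈ e, v ∈ S)).card ≤ α * (S.card - 1))
    (i : ℕ) (hi : 2 ^ i ≤ α) :
    ∃ E : Fin (2 ^ i) → Finset (Sym2 V),
      (∀ j k, j ≠ k → Disjoint (E j) (E k)) ∧
      Finset.univ.biUnion E = G.edgeFinset ∧
      ∀ (j : Fin (2 ^ i)) (S : Finset V), 2 ≤ S.card →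
        (((E j).filter (fun e => ∀ v ∈ e, v ∈ S)).card : ℝ) ≤
          ((α : ℝ) / (2 : ℝ) ^ ((i : ℤ) - 1) + 1) * ((S.card : ℝ) - 1) := by
  classical
  have hα : 1 ≤ α := le_trans (Nat.one_le_two_pow) hi
  obtain ⟨f, hfinj, hfbound⟩ := pab_exists_order G α hα (pab_sum_deg_le G α harb)
  set N : V → Finset V := fun v => Finset.univ.filter (fun w => G.Adj v w ∧ f v < f w) with hN
  have hNcard : ∀ v, (N v).card ≤ 2 * α - 1 := hfbound
  -- the per-class capacity
  set p : ℕ := 2 ^ i with hp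
  have hppos : 0 < p := Nat.pow_pos (by norm_num)
  set d : ℕ := 2 * α / p + 1 with hd
  have hd0 : 0 < d := Nat.succ_pos _
  have hd2 : 2 * α - 1 ≤ d * p := by
    have h1 : 2 * α < d * p := by
      rw [hd]
      exact (Nat.div_lt_iff_lt_mul hppos).mp (Nat.lt_succ_self _)
    exact le_trans (by omega) (le_of_lt h1)
  have hd3 : d * p ≤ 2 * α + p := by
    rw [hd, add_mul, one_mul]
    exact Nat.add_le_add_right (Nat.div_mul_le_self (2 * α) p) p
  -- rank of an out-neighbor
  set rk : V → V → ℕ := fun v w => ((N v).filter (fun u => f u < f w)).card with hrk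
  have hrk_lt : ∀ v w, w ∈ N v → rk v w < (N v).card := by
    intro v w hw
    simp only [hrk]
    have hsub : (N v).filter (fun u => f u < f w) ⊆ (N v).erase w := by
      intro u hu
      rw [mem_filter] at hu
      refine Finset.mem_erase.mpr ⟨?_, hu.1⟩
      intro h; rw [h] at hu; omega
    have h1 := Finset.card_le_card hsub
    rw [Finset.card_erase_of_mem hw] at h1
    have h2 : 0 < (N v).card := Finset.card_pos.mpr ⟨w, hw⟩
    omega
  have hrk_inj : ∀ v, ∀ w1 ∈ N v, ∀ w2 ∈ N v, rk v w1 = rk v w2 → w1 = w2 := by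
    intro v w1 hw1 w2 hw2 heq
    by_contra hne
    have key : ∀ a ∈ N v, ∀ b ∈ N v, f a < f b → rk v a < rk v b := by
      intro a ha b hb hab
      apply Finset.card_lt_card
      rw [Finset.ssubset_iff_of_subset]
      · exact ⟨a, mem_filter.mpr ⟨ha, hab⟩, fun h => by
          rw [mem_filter] at h; omega⟩
      · intro u hu
        rw [mem_filter] at hu ⊢
        exact ⟨hu.1, lt_trans hu.2 hab⟩
    rcases lt_trichotomy (f w1) (f w2) with h | h | h
    · have := key w1 hw1 w2 hw2 h; omega
    · exact hne (hfinj h)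
    · have := key w2 hw2 w1 hw1 h; omega
  -- orientation of an edge: (smaller-f endpoint, larger-f endpoint)
  set ordered : Sym2 V → V × V := Sym2.lift ⟨fun a b => if f a < f b then (a, b) else (b, a),
    by
      intro a b
      simp only
      rcases lt_trichotomy (f a) (f b) with h | h | h
      · rw [if_pos h, if_neg (by omega)]
      · have : a = b := hfinj h
        subst this; rfl
      · rw [if_neg (by omega), if_pos h]⟩ with hordered
  set out : Sym2 V → V := fun e => (ordered e).1 with hout
  set oth : Sym2 V → V := fun e => (ordered e).2 with hoth
  set cls : Sym2 V → ℕ := fun e => rk (out e) (oth e) / d with hcls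
  -- key structural fact about edges
  have hkey : ∀ e ∈ G.edgeFinset, G.Adj (out e) (oth e) ∧ f (out e) < f (oth e) ∧
      e = s(out e, oth e) := by
    intro e he
    induction e using Sym2.ind with
    | _ a b =>
      rw [SimpleGraph.mem_edgeFinset, SimpleGraph.mem_edgeSet] at he
      have hne : a ≠ b := G.ne_of_adj he
      have hfne : f a ≠ f b := fun h => hne (hfinj h)
      have hord : ordered s(a, b) = if f a < f b then (a, b) else (b, a) := by
        rw [hordered]; exact Sym2.lift_mk _ a b
      rcases lt_trichotomy (f a) (f b) with h | h | h
      · have h1 : ordered s(a, b) = (a, b) := by rw [hord, if_pos h]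
        have hout1 : out s(a, b) = a := by rw [hout]; simp [h1]
        have hoth1 : oth s(a, b) = b := by rw [hoth]; simp [h1]
        rw [hout1, hoth1]
        exact ⟨he, h, rfl⟩
      · exact absurd h hfne
      · have h1 : ordered s(a, b) = (b, a) := by rw [hord, if_neg (by omega)]
        have hout1 : out s(a, b) = b := by rw [hout]; simp [h1]
        have hoth1 : oth s(a, b) = a := by rw [hoth]; simp [h1]
        rw [hout1, hoth1]
        exact ⟨he.symm, h, Sym2.eq_swap⟩
  have hothN : ∀ e ∈ G.edgeFinset, oth e ∈ N (out e) := by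
    intro e he
    obtain ⟨h1, h2, _⟩ := hkey e he
    rw [hN]
    exact mem_filter.mpr ⟨Finset.mem_univ _, h1, h2⟩
  have hclslt : ∀ e ∈ G.edgeFinset, cls e < p := by
    intro e he
    rw [hcls]
    rw [Nat.div_lt_iff_lt_mul hd0]
    have h1 := hrk_lt (out e) (oth e) (hothN e he)
    have h2 := hNcard (out e)
    calc rk (out e) (oth e) < (N (out e)).card := h1
      _ ≤ 2 * α - 1 := h2
      _ ≤ d * p := hd2
      _ = p * d := mul_comm _ _
  refine ⟨fun j => G.edgeFinset.filter (fun e => cls e = j.val), ?_, ?_, ?_⟩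
  · -- disjointness
    intro j k hjk
    rw [Finset.disjoint_left]
    intro e he1 he2
    rw [mem_filter] at he1 he2
    exact hjk (Fin.ext (he1.2 ▸ he2.2))
  · -- union
    ext e
    simp only [Finset.mem_biUnion, Finset.mem_univ, true_and, mem_filter]
    constructor
    · rintro ⟨j, hj, _⟩; exact hj
    · intro he; exact ⟨⟨cls e, hclslt e he⟩, he, rfl⟩
  · -- the arboricity bound for each part
    intro j S hS
    set F : Finset (Sym2 V) :=
      (G.edgeFinset.filter (fun e => cls e = j.val)).filter (fun e => ∀ v ∈ e, v ∈ S) with hF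
    have hSne : S.Nonempty := Finset.card_pos.mp (by omega)
    obtain ⟨vmax, hvmax, hmax⟩ := Finset.exists_max_image S f hSne
    -- F members: basic facts
    have hmem : ∀ e ∈ F, e ∈ G.edgeFinset ∧ cls e = j.val ∧ out e ∈ S ∧ oth e ∈ S := by
      intro e he
      rw [hF, mem_filter, mem_filter] at he
      obtain ⟨⟨he1, he2⟩, he3⟩ := he
      obtain ⟨_, _, heq⟩ := hkey e he1
      refine ⟨he1, he2, ?_, ?_⟩
      · have h := Sym2.mem_mk_left (out e) (oth e)
        rw [← heq] at h
        exact he3 _ h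
      · have h := Sym2.mem_mk_right (out e) (oth e)
        rw [← heq] at h
        exact he3 _ h
    -- count fiberwise over the out-endpoint
    have hcard : F.card ≤ d * (S.erase vmax).card := by
      apply Finset.card_le_mul_card_image_of_maps_to (f := out)
      · intro e he
        obtain ⟨he1, _, hS1, hS2⟩ := hmem e he
        obtain ⟨_, hlt, _⟩ := hkey e he1
        refine Finset.mem_erase.mpr ⟨?_, hS1⟩
        intro h
        have := hmax (oth e) hS2
        rw [h] at hlt
        omega
      · intro v _
        -- fiber over v injects (via oth) into rank-class of N v
        have step1 : (F.filter (fun e => out e = v)).card ≤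
            ((N v).filter (fun w => rk v w / d = j.val)).card := by
          apply Finset.card_le_card_of_injOn oth
          · intro e he
            rw [Finset.mem_coe, mem_filter] at he
            obtain ⟨heF, hev⟩ := he
            obtain ⟨he1, he2, _, _⟩ := hmem e heF
            rw [Finset.mem_coe, mem_filter]
            constructor
            · rw [← hev]; exact hothN e he1
            · rw [← hev]
              rw [hcls] at he2
              exact he2
          · intro e1 he1 e2 he2 heq
            simp only [Finset.mem_coe, mem_filter] at he1 he2
            obtain ⟨he1F, he1v⟩ := he1
            obtain ⟨he2F, he2v⟩ := he2
            obtain ⟨_, _, heq1⟩ := hkey e1 (hmem e1 he1F).1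
            obtain ⟨_, _, heq2⟩ := hkey e2 (hmem e2 he2F).1
            rw [heq1, heq2, he1v, he2v, heq]
        have step2 : ((N v).filter (fun w => rk v w / d = j.val)).card ≤ d := by
          have h1 : ((N v).filter (fun w => rk v w / d = j.val)).card ≤
              (Finset.Ico (j.val * d) (j.val * d + d)).card := by
            apply Finset.card_le_card_of_injOn (rk v)
            · intro w hw
              rw [Finset.mem_coe, mem_filter] at hw
              obtain ⟨hw1, hw2⟩ := hw
              have hdm := Nat.div_add_mod (rk v w) d
              rw [hw2] at hdm
              rw [Finset.mem_coe, Finset.mem_Ico]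
              constructor
              · rw [mul_comm]
                calc d * j.val ≤ d * j.val + rk v w % d := Nat.le_add_right _ _
                  _ = rk v w := hdm
              · rw [mul_comm]
                calc rk v w = d * j.val + rk v w % d := hdm.symm
                  _ < d * j.val + d := Nat.add_lt_add_left (Nat.mod_lt _ hd0) _
            · intro w1 hw1 w2 hw2 heq
              simp only [Finset.mem_coe, mem_filter] at hw1 hw2
              exact hrk_inj v w1 hw1.1 w2 hw2.1 heq
          rw [Nat.card_Ico] at h1
          rw [Nat.add_sub_cancel_left] at h1
          exact h1
        exact le_trans step1 step2
    rw [Finset.card_erase_of_mem hvmax] at hcard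
    -- now pass to the reals
    have hS1 : 1 ≤ S.card := by omega
    have hcastS : ((S.card - 1 : ℕ) : ℝ) = (S.card : ℝ) - 1 := by
      push_cast [Nat.cast_sub hS1]
      ring
    have hR1 : (F.card : ℝ) ≤ (d : ℝ) * ((S.card : ℝ) - 1) := by
      calc (F.card : ℝ) ≤ ((d * (S.card - 1) : ℕ) : ℝ) := Nat.cast_le.mpr hcard
        _ = (d : ℝ) * ((S.card : ℝ) - 1) := by rw [Nat.cast_mul, hcastS]
    have hRHS : (α : ℝ) / (2 : ℝ) ^ ((i : ℤ) - 1) + 1 = (2 * α + p : ℝ) / (p : ℝ) := by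
      have hzp : (2 : ℝ) ^ ((i : ℤ) - 1) = (2 : ℝ) ^ (i : ℕ) / 2 := by
        rw [zpow_sub₀ (by norm_num : (2 : ℝ) ≠ 0), zpow_one, zpow_natCast]
      have hpc : (p : ℝ) = (2 : ℝ) ^ (i : ℕ) := by
        rw [hp]; push_cast; ring
      rw [hzp, hpc]
      have h2 : (0 : ℝ) < (2 : ℝ) ^ (i : ℕ) := by positivity
      field_simp
    have hdR : (d : ℝ) ≤ (α : ℝ) / (2 : ℝ) ^ ((i : ℤ) - 1) + 1 := by
      rw [hRHS]
      rw [le_div_iff₀ (by exact_mod_cast hppos : (0 : ℝ) < (p : ℝ))]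
      calc (d : ℝ) * (p : ℝ) = ((d * p : ℕ) : ℝ) := by push_cast; ring
        _ ≤ ((2 * α + p : ℕ) : ℝ) := Nat.cast_le.mpr hd3
        _ = (2 * α + p : ℝ) := by push_cast; ring
    calc (F.card : ℝ) ≤ (d : ℝ) * ((S.card : ℝ) - 1) := hR1
      _ ≤ ((α : ℝ) / (2 : ℝ) ^ ((i : ℤ) - 1) + 1) * ((S.card : ℝ) - 1) := by
          apply mul_le_mul_of_nonneg_right hdR
          have : (2 : ℝ) ≤ (S.card : ℝ) := by exact_mod_cast hS
          linarith
end

section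
/- Let G = (V, E) be a finite simple graph with maximum degree Δ and arboricity at most α (i.e., |E(G[S])| ≤ α·(|S| − 1) for every S ⊆ V with |S| ≥ 2), and let h be a natural number with 2^h ≤ α. Then there exists a partition of E into 2^h pairwise disjoint sets E_1, …, E_{2^h} such that for every j ∈ {1, …, 2^h}: (i) the maximum degree of the spanning subgraph (V, E_j) is at most Δ/2^h + 2, and (ii) (V, E_j) has arboricity at most α/2^{h−1} + 1, i.e., |E_j ∩ E(G[S])| ≤ (α/2^{h−1} + 1)·(|S| − 1) for every S ⊆ V with |S| ≥ 2 (inequalities between real numbers). -/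
set_option linter.unusedSectionVars false


open Equiv Function

private lemma flip_decide (a b : ℕ) (h : a ≠ b) : decide (b < a) = !decide (a < b) := by
  rcases Nat.lt_or_ge a b with h1 | h1
  · simp [h1, Nat.not_lt.2 (Nat.le_of_lt h1)]
  · have h2 : b < a := lt_of_le_of_ne h1 (Ne.symm h)
    simp [h2, Nat.not_lt.2 (Nat.le_of_lt h2)]

lemma exists_alt_coloring {X : Type*} [Fintype X] [DecidableEq X]
    (σ τ : Equiv.Perm X) (hσ : ∀ x, σ (σ x) = x) (hτ : ∀ x, τ (τ x) = x)
    (hσf : ∀ x, σ x ≠ x) (hτf : ∀ x, τ x ≠ x) :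
    ∃ c : X → Bool, ∀ x, c (σ x) = !c x ∧ c (τ x) = !c x := by
  classical
  set π : Equiv.Perm X := σ.trans τ with hπdef
  have hπ_apply : ∀ x, π x = τ (σ x) := fun x => rfl
  have hσinv : σ⁻¹ = σ := by
    ext x
    apply σ.injective
    simp [hσ]
  have hτinv : τ⁻¹ = τ := by
    ext x
    apply τ.injective
    simp [hτ]
  have h1 : σ * π * σ = π⁻¹ := by
    have : (σ * π * σ) * π = 1 := by
      ext x
      simp [Perm.mul_apply, hπ_apply, hσ, hτ]
    exact eq_inv_of_mul_eq_one_left this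
  have hconj : ∀ m : ℤ, σ * π ^ m * σ = π ^ (-m) := by
    intro m
    have h2 := map_zpow (MulAut.conj σ) π m
    simp only [MulAut.conj_apply, hσinv] at h2
    rw [h2, h1, ← zpow_neg_one, ← zpow_mul]
    ring_nf
  have hconjn : ∀ k : ℕ, σ * π ^ k * σ = (π ^ k)⁻¹ := by
    intro k
    have := hconj (k : ℤ)
    rwa [zpow_neg, zpow_natCast] at this
  -- key: x and σ x are in different cycles
  have hkey : ∀ x, ¬ π.SameCycle x (σ x) := by
    intro x hxc
    obtain ⟨i, -, hi⟩ := hxc.exists_pow_eq'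
    rcases Nat.even_or_odd i with ⟨k, hk⟩ | ⟨k, hk⟩
    · -- σ fixes π^k x
      apply hσf ((π ^ k) x)
      have e1 : σ ((π ^ k) x) = (σ * π ^ k * σ) (σ x) := by
        simp [Perm.mul_apply, hσ]
      have e2 : σ x = (π ^ k) ((π ^ k) x) := by
        rw [← hi, hk, pow_add, Perm.mul_apply]
      rw [e1, hconjn, e2]
      simp
    · -- τ fixes π^(k+1) x
      apply hτf ((π ^ (k + 1)) x)
      have e1 : σ ((π ^ (k + 1)) x) = (σ * π ^ (k + 1) * σ) (σ x) := by
        simp [Perm.mul_apply, hσ]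
      have e2 : σ x = (π ^ (k + 1)) ((π ^ k) x) := by
        rw [← hi, ← Perm.mul_apply, ← pow_add]
        have hik : i = k + 1 + k := by omega
        rw [hik]
      have hσy : σ ((π ^ (k + 1)) x) = (π ^ k) x := by
        rw [e1, hconjn, e2]
        simp
      have hτy : τ ((π ^ (k + 1)) x) = π (σ ((π ^ (k + 1)) x)) := by
        rw [hπ_apply, hσ]
      rw [hτy, hσy, ← Perm.mul_apply, ← pow_succ']
  -- transport of SameCycle under σ
  have htrans : ∀ x y, π.SameCycle x y → π.SameCycle (σ x) (σ y) := by
    rintro x y ⟨m, hm⟩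
    refine ⟨-m, ?_⟩
    have : (π ^ (-m)) (σ x) = (σ * π ^ m * σ) (σ x) := by rw [hconj]
    rw [this]
    simp [Perm.mul_apply, hσ, hm]
  have hrefl : ∀ x, π.SameCycle x x := fun x => Equiv.Perm.SameCycle.refl π x
  -- the labelling function
  let idx : X ≃ Fin (Fintype.card X) := Fintype.equivFin X
  have hne : ∀ x : X, (Finset.univ.filter (fun y => π.SameCycle x y)).Nonempty :=
    fun x => ⟨x, by simp [hrefl]⟩
  let N : X → ℕ := fun x =>
    (((Finset.univ.filter (fun y => π.SameCycle x y)).image (fun y => (idx y : ℕ)))).max'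
      ((hne x).image _)
  have hNsc : ∀ x y, π.SameCycle x y → N x = N y := by
    intro x y hxy
    have : (Finset.univ.filter (fun z => π.SameCycle x z)) =
        (Finset.univ.filter (fun z => π.SameCycle y z)) := by
      ext z
      simp only [Finset.mem_filter, Finset.mem_univ, true_and]
      exact ⟨fun h => hxy.symm.trans h, fun h => hxy.trans h⟩
    simp only [N, this]
  have hNne : ∀ x y, ¬ π.SameCycle x y → N x ≠ N y := by
    intro x y hxy hN
    have hx := Finset.max'_mem _ (((hne x)).image (fun y => (idx y : ℕ)))
    have hy := Finset.max'_mem _ (((hne y)).image (fun y => (idx y : ℕ)))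
    rw [Finset.mem_image] at hx hy
    obtain ⟨z, hz, hz2⟩ := hx
    obtain ⟨w, hw, hw2⟩ := hy
    rw [Finset.mem_filter] at hz hw
    have : z = w := by
      apply idx.injective
      apply Fin.ext
      rw [hz2, hw2]
      exact hN
    exact hxy (hz.2.trans (this ▸ hw.2.symm))
  refine ⟨fun x => decide (N x < N (σ x)), fun x => ?_⟩
  have hNx : N (σ (σ x)) = N x := by rw [hσ]
  constructor
  · show decide (N (σ x) < N (σ (σ x))) = _
    rw [hNx]
    exact flip_decide _ _ (hNne _ _ (hkey x))
  · -- c (τ x)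
    have h2 : N (τ x) = N (σ x) := by
      apply (hNsc _ _ _).symm
      exact ⟨1, by simp [hπ_apply, hσ]⟩
    have h3 : N (σ (τ x)) = N x := by
      apply (hNsc _ _ _).symm
      refine ⟨-1, ?_⟩
      have : σ (τ x) = (σ * π * σ) x := by simp [Perm.mul_apply, hπ_apply, hσ]
      rw [this, h1]
      simp
    show decide (N (τ x) < N (σ (τ x))) = _
    rw [h2, h3]
    exact flip_decide _ _ (hNne _ _ (hkey x))


open Equiv Function

section Pairing

variable {ι A : Type*} [DecidableEq ι] [DecidableEq A]

private def pIdx (n k : ℕ) : ℕ :=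
  if k % 2 = 0 then (if k + 1 < n then k + 1 else k) else k - 1

private lemma pIdx_lt {n k : ℕ} (h : k < n) : pIdx n k < n := by
  simp only [pIdx]; split_ifs <;> omega

private lemma pIdx_pIdx {n k : ℕ} (h : k < n) : pIdx n (pIdx n k) = k := by
  simp only [pIdx]; split_ifs <;> omega

private lemma pIdx_fix {n k : ℕ} (h : k < n) : pIdx n k = k ↔ (k % 2 = 0 ∧ k + 1 = n) := by
  simp only [pIdx]; split_ifs <;> omega

private def fiber (D : Finset ι) (t : ι → A) (a : A) : Finset ι :=
  D.filter (fun e' => t e' = a)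

private noncomputable def fEq (D : Finset ι) (t : ι → A) (a : A) :
    {x // x ∈ fiber D t a} ≃ Fin (fiber D t a).card := (fiber D t a).equivFin

private lemma mem_fiber_self (D : Finset ι) (t : ι → A) (e : {x // x ∈ D}) :
    e.1 ∈ fiber D t (t e.1) := Finset.mem_filter.mpr ⟨e.2, rfl⟩

private def liftF (D : Finset ι) (t : ι → A) (a : A) (y : {x // x ∈ fiber D t a}) :
    {x // x ∈ D} := ⟨y.1, (Finset.mem_filter.mp y.2).1⟩

private lemma t_liftF (D : Finset ι) (t : ι → A) (a : A) (y : {x // x ∈ fiber D t a}) :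
    t (liftF D t a y).1 = a := (Finset.mem_filter.mp y.2).2

private noncomputable def fidx (D : Finset ι) (t : ι → A) (e : {x // x ∈ D}) : ℕ :=
  (fEq D t (t e.1) ⟨e.1, mem_fiber_self D t e⟩).val

private lemma fidx_lt (D : Finset ι) (t : ι → A) (e : {x // x ∈ D}) :
    fidx D t e < (fiber D t (t e.1)).card := Fin.is_lt _

private lemma fidx_congr (D : Finset ι) (t : ι → A) (e : {x // x ∈ D}) (a : A)
    (ht : t e.1 = a) (h : e.1 ∈ fiber D t a) :
    fidx D t e = (fEq D t a ⟨e.1, h⟩).val := by subst ht; rfl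

private noncomputable def prt (D : Finset ι) (t : ι → A) (e : {x // x ∈ D}) :
    {x // x ∈ D} × Bool :=
  if _ : pIdx (fiber D t (t e.1)).card (fidx D t e) = fidx D t e then (e, false)
  else (liftF D t (t e.1) ((fEq D t (t e.1)).symm
    ⟨pIdx (fiber D t (t e.1)).card (fidx D t e), pIdx_lt (fidx_lt D t e)⟩), true)

private lemma prt_congr (D : Finset ι) (t : ι → A) (e : {x // x ∈ D}) (a : A)
    (ht : t e.1 = a) (kk : ℕ) (hkk : fidx D t e = kk) (hlt : kk < (fiber D t a).card) :
    prt D t e =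
      if _ : pIdx (fiber D t a).card kk = kk then (e, false)
      else (liftF D t a ((fEq D t a).symm
        ⟨pIdx (fiber D t a).card kk, pIdx_lt hlt⟩), true) := by
  subst ht; subst hkk; rfl

private lemma fidx_liftF (D : Finset ι) (t : ι → A) (a : A) (y : {x // x ∈ fiber D t a}) :
    fidx D t (liftF D t a y) = (fEq D t a y).val := by
  have ht := t_liftF D t a y
  have h : (liftF D t a y).1 ∈ fiber D t a := y.2
  rw [fidx_congr D t _ a ht h]
  have h2 : (⟨(liftF D t a y).1, h⟩ : {x // x ∈ fiber D t a}) = y := Subtype.ext rfl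
  rw [h2]

-- P1
private lemma t_prt (D : Finset ι) (t : ι → A) (e : {x // x ∈ D}) :
    t (prt D t e).1.1 = t e.1 := by
  rw [prt]
  split_ifs with h
  · rfl
  · exact t_liftF D t _ _

-- P2
private lemma prt_prt (D : Finset ι) (t : ι → A) (e : {x // x ∈ D})
    (h : (prt D t e).2 = true) : prt D t (prt D t e).1 = (e, true) := by
  set a := t e.1 with ha
  set n := (fiber D t a).card with hn
  set k := fidx D t e with hk
  have hklt : k < n := fidx_lt D t e
  by_cases hp : pIdx n k = k
  · rw [prt] at h
    simp only [← ha, ← hn, ← hk, dif_pos hp] at h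
    simp at h
  · have hprt : prt D t e = (liftF D t a ((fEq D t a).symm ⟨pIdx n k, pIdx_lt hklt⟩), true) := by
      rw [prt_congr D t e a ha.symm k hk.symm hklt, dif_neg hp]
    have he'eq : (prt D t e).1 = liftF D t a ((fEq D t a).symm ⟨pIdx n k, pIdx_lt hklt⟩) := by
      rw [hprt]
    have ht' : t (prt D t e).1.1 = a := by rw [he'eq]; exact t_liftF D t a _
    have hidx' : fidx D t (prt D t e).1 = pIdx n k := by
      rw [he'eq, fidx_liftF]
      simp
    have hpp : pIdx n (pIdx n k) = k := pIdx_pIdx hklt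
    rw [prt_congr D t (prt D t e).1 a ht' (pIdx n k) hidx' (pIdx_lt hklt)]
    have hcond : ¬ (pIdx (fiber D t a).card (pIdx n k) = pIdx n k) := by
      rw [← hn, hpp]
      exact fun hc => hp hc.symm
    rw [dif_neg hcond]
    have hfin : (⟨pIdx (fiber D t a).card (pIdx n k), pIdx_lt (pIdx_lt hklt)⟩ :
        Fin (fiber D t a).card) = fEq D t a ⟨e.1, ha ▸ mem_fiber_self D t e⟩ := by
      apply Fin.ext
      simp only
      conv_lhs => rw [← hn, hpp]
      rw [hk]
      exact fidx_congr D t e a ha.symm _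
    rw [hfin, Equiv.symm_apply_apply]
    constructor

-- P3
private lemma prt_ne (D : Finset ι) (t : ι → A) (e : {x // x ∈ D})
    (h : (prt D t e).2 = true) : (prt D t e).1 ≠ e := by
  set a := t e.1 with ha
  set n := (fiber D t a).card with hn
  set k := fidx D t e with hk
  have hklt : k < n := fidx_lt D t e
  by_cases hp : pIdx n k = k
  · rw [prt] at h
    simp only [← ha, ← hn, ← hk, dif_pos hp] at h
    simp at h
  · intro hcontra
    have hprt : prt D t e = (liftF D t a ((fEq D t a).symm ⟨pIdx n k, pIdx_lt hklt⟩), true) := by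
      rw [prt_congr D t e a ha.symm k hk.symm hklt, dif_neg hp]
    have h1 : fidx D t (prt D t e).1 = pIdx n k := by
      rw [hprt, fidx_liftF]; simp
    rw [hcontra] at h1
    exact hp (h1.symm.trans hk.symm)
-- P4 : uniqueness of improper element in a fiber
private lemma prt_fix_unique (D : Finset ι) (t : ι → A) (e e' : {x // x ∈ D})
    (h : (prt D t e).2 = false) (h' : (prt D t e').2 = false) (ht : t e.1 = t e'.1) :
    e = e' := by
  set a := t e'.1 with ha
  have hklt : fidx D t e < (fiber D t a).card := by
    have := fidx_lt D t e
    rwa [ht] at this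
  have hklt' : fidx D t e' < (fiber D t a).card := fidx_lt D t e'
  have hp : pIdx (fiber D t a).card (fidx D t e) = fidx D t e := by
    by_contra hc
    rw [prt_congr D t e a ht (fidx D t e) rfl hklt, dif_neg hc] at h
    simp at h
  have hp' : pIdx (fiber D t a).card (fidx D t e') = fidx D t e' := by
    by_contra hc
    rw [prt_congr D t e' a rfl (fidx D t e') rfl hklt', dif_neg hc] at h'
    simp at h'
  have h1 := (pIdx_fix hklt).mp hp
  have h2 := (pIdx_fix hklt').mp hp'
  have : fidx D t e = fidx D t e' := by omega
  have heq : (fEq D t a ⟨e.1, ht ▸ mem_fiber_self D t e⟩) =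
      (fEq D t a ⟨e'.1, mem_fiber_self D t e'⟩) := by
    apply Fin.ext
    rw [← fidx_congr D t e a ht _, ← fidx_congr D t e' a rfl _]
    exact this
  have h6 := (fEq D t a).injective heq
  have h7 : e.1 = e'.1 := congrArg (Subtype.val : {x // x ∈ fiber D t a} → ι) h6
  exact Subtype.ext h7

/-- The full pairing involution on `{x // x ∈ D} × Bool`. -/
private noncomputable def pairInv (D : Finset ι) (t : ι → A) :
    ({x // x ∈ D} × Bool) → ({x // x ∈ D} × Bool) :=
  fun x => if (prt D t x.1).2 then ((prt D t x.1).1, x.2) else (x.1, !x.2)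

private lemma pairInv_involutive (D : Finset ι) (t : ι → A) :
    Function.Involutive (pairInv D t) := by
  intro x
  by_cases h : (prt D t x.1).2 = true
  · have h2 := prt_prt D t x.1 h
    simp only [pairInv, h, if_true]
    simp only [pairInv, h2]
    simp
  · rw [Bool.not_eq_true] at h
    simp [pairInv, h]
private lemma pairInv_ne (D : Finset ι) (t : ι → A) (x : {x // x ∈ D} × Bool) :
    pairInv D t x ≠ x := by
  intro hc
  by_cases h : (prt D t x.1).2 = true
  · simp only [pairInv, h, if_true] at hc
    rw [Prod.ext_iff] at hc
    exact prt_ne D t x.1 h hc.1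
  · rw [Bool.not_eq_true] at h
    simp only [pairInv, h] at hc
    rw [Prod.ext_iff] at hc
    have := hc.2
    simp at this

private lemma pairInv_t (D : Finset ι) (t : ι → A) (x : {x // x ∈ D} × Bool) :
    t ((pairInv D t x).1.1) = t x.1.1 := by
  by_cases h : (prt D t x.1).2 = true
  · simp only [pairInv, h, if_true]
    exact t_prt D t x.1
  · simp [pairInv, h]

private lemma pairInv_mixed_unique (D : Finset ι) (t : ι → A) (e e' : {x // x ∈ D})
    (h : (pairInv D t (e, false)).2 = true) (h' : (pairInv D t (e', false)).2 = true)
    (ht : t e.1 = t e'.1) : e = e' := by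
  have key : ∀ f : {x // x ∈ D}, (pairInv D t (f, false)).2 = true → (prt D t f).2 = false := by
    intro f hf
    by_contra hc
    rw [Bool.not_eq_false] at hc
    simp only [pairInv, hc, if_true] at hf
    exact Bool.false_ne_true hf
  exact prt_fix_unique D t e e' (key e h) (key e' h') ht

private lemma pairInv_proper (D : Finset ι) (t : ι → A) (x : {x // x ∈ D} × Bool)
    (h : (pairInv D t x).2 = x.2) : pairInv D t x = ((pairInv D t x).1, x.2) := by
  rw [← h]

end Pairing

section Counting

variable {ι A B : Type*} [DecidableEq ι] [DecidableEq A] [DecidableEq B]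

private lemma two_mul_card_filter_le {γ : Type*} [DecidableEq γ] (F : Finset γ)
    (c : γ → Bool) (pr : γ → γ) (e0 : γ)
    (hpr : ∀ e ∈ F, e ≠ e0 → pr e ∈ F ∧ c (pr e) = !c e ∧ pr (pr e) = e) :
    2 * (F.filter (fun e => c e = true)).card ≤ F.card + 1 := by
  classical
  set T := F.filter (fun e => c e = true) with hT
  set Fl := F.filter (fun e => ¬ (c e = true)) with hFl
  have hsum : T.card + Fl.card = F.card := Finset.card_filter_add_card_filter_not _
  have hinj : (T.erase e0).card ≤ Fl.card := by
    apply Finset.card_le_card_of_injOn pr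
    · intro e he
      rw [Finset.mem_coe, Finset.mem_erase] at he
      obtain ⟨hne, heT⟩ := he
      rw [hT, Finset.mem_filter] at heT
      obtain ⟨heF, hce⟩ := heT
      obtain ⟨h1, h2, h3⟩ := hpr e heF hne
      rw [Finset.mem_coe, hFl, Finset.mem_filter]
      refine ⟨h1, ?_⟩
      rw [h2, hce]
      simp
    · intro e1 h1 e2 h2 heq
      rw [Finset.mem_coe, Finset.mem_erase] at h1 h2
      rw [hT, Finset.mem_filter] at h1 h2
      have p1 := (hpr e1 h1.2.1 h1.1).2.2
      have p2 := (hpr e2 h2.2.1 h2.1).2.2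
      rw [← p1, heq, p2]
  have herase : T.card ≤ (T.erase e0).card + 1 := by
    by_cases h : e0 ∈ T
    · rw [Finset.card_erase_of_mem h]
      omega
    · rw [Finset.erase_eq_of_notMem h]
      omega
  omega

private lemma count_both (D : Finset ι) (t : ι → A)
    (c : ({x // x ∈ D} × Bool) → Bool)
    (hc : ∀ x, c (pairInv D t x) = !c x) (a : A) (c' : ι → Bool)
    (hc' : ∀ e (he : e ∈ D), c' e = c (⟨e, he⟩, false)) :
    2 * ((fiber D t a).filter (fun e => c' e = true)).card ≤ (fiber D t a).card + 1 ∧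
    2 * ((fiber D t a).filter (fun e => c' e = false)).card ≤ (fiber D t a).card + 1 := by
  classical
  rcases (fiber D t a).eq_empty_or_nonempty with hFe | hFne
  · rw [hFe]; simp
  set pr : ι → ι := fun x =>
    if hx : x ∈ D then ((pairInv D t (⟨x, hx⟩, false)).1 : {x // x ∈ D}).1 else x with hpr
  have he0 : ∃ e0 : ι, ∀ e (heD : e ∈ D), e ∈ fiber D t a → e ≠ e0 →
      (pairInv D t (⟨e, heD⟩, false)).2 = false := by
    by_cases hex : ∃ e0 ∈ fiber D t a, ∃ h0 : e0 ∈ D, (pairInv D t (⟨e0, h0⟩, false)).2 = true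
    · obtain ⟨e0, he0F, h0, he0⟩ := hex
      refine ⟨e0, fun e heD heF hne => ?_⟩
      by_contra hcc
      rw [Bool.not_eq_false] at hcc
      have ht1 : t e = a := (Finset.mem_filter.mp heF).2
      have ht2 : t e0 = a := (Finset.mem_filter.mp he0F).2
      have heq := pairInv_mixed_unique D t ⟨e, heD⟩ ⟨e0, h0⟩ hcc he0 (by rw [ht1, ht2])
      exact hne (congrArg Subtype.val heq)
    · refine ⟨hFne.choose, fun e heD heF hne => ?_⟩
      by_contra hcc
      rw [Bool.not_eq_false] at hcc
      exact hex ⟨e, heF, heD, hcc⟩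
  obtain ⟨e0, he0⟩ := he0
  have hkey : ∀ e ∈ fiber D t a, e ≠ e0 →
      pr e ∈ fiber D t a ∧ c' (pr e) = !c' e ∧ pr (pr e) = e := by
    intro e heF hne
    have heD : e ∈ D := (Finset.mem_filter.mp heF).1
    have hta : t e = a := (Finset.mem_filter.mp heF).2
    have hmix : (pairInv D t (⟨e, heD⟩, false)).2 = false := he0 e heD heF hne
    have hpre : pr e = (pairInv D t (⟨e, heD⟩, false)).1.1 := by
      simp only [hpr, dif_pos heD]
    have hprD : pr e ∈ D := hpre ▸ (pairInv D t (⟨e, heD⟩, false)).1.2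
    have hsub : (⟨pr e, hprD⟩ : {x // x ∈ D}) = (pairInv D t (⟨e, heD⟩, false)).1 :=
      Subtype.ext hpre
    have hy : ((⟨pr e, hprD⟩ : {x // x ∈ D}), false) = pairInv D t (⟨e, heD⟩, false) := by
      rw [Prod.ext_iff]
      exact ⟨hsub, hmix.symm⟩
    refine ⟨?_, ?_, ?_⟩
    · refine Finset.mem_filter.mpr ⟨hprD, ?_⟩
      have := pairInv_t D t (⟨e, heD⟩, false)
      rw [hpre, this]
      exact hta
    · rw [hc' (pr e) hprD, hc' e heD, hy, hc]
    · have hinv := pairInv_involutive D t (⟨e, heD⟩, false)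
      have : pr (pr e) = (pairInv D t ((⟨pr e, hprD⟩ : {x // x ∈ D}), false)).1.1 := by
        exact dif_pos hprD
      rw [this, hy, hinv]
  constructor
  · exact two_mul_card_filter_le (fiber D t a) c' pr e0 hkey
  · have hneg : ∀ e ∈ fiber D t a, e ≠ e0 →
        pr e ∈ fiber D t a ∧ (!c' (pr e)) = !(!c' e) ∧ pr (pr e) = e := by
      intro e h1 h2
      obtain ⟨q1, q2, q3⟩ := hkey e h1 h2
      exact ⟨q1, by rw [q2], q3⟩
    have := two_mul_card_filter_le (fiber D t a) (fun e => !c' e) pr e0 hneg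
    have hset : (fiber D t a).filter (fun e => (!c' e) = true) =
        (fiber D t a).filter (fun e => c' e = false) := by
      apply Finset.filter_congr
      intro e _
      simp
    rwa [hset] at this

private lemma sfilter_eq {C : Type*} [DecidableEq C] (D : Finset ι) (c' : ι → Bool)
    (u : ι → C) (a : C) :
    (D.filter (fun e => c' e = true)).filter (fun e => u e = a) =
      (fiber D u a).filter (fun e => c' e = true) := by
  ext e
  simp only [fiber, Finset.mem_filter]
  tauto

private lemma dfilter_eq {C : Type*} [DecidableEq C] (D : Finset ι) (c' : ι → Bool)
    (u : ι → C) (a : C) :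
    ((D \ D.filter (fun e => c' e = true)).filter (fun e => u e = a)) =
      (fiber D u a).filter (fun e => c' e = false) := by
  ext e
  simp only [fiber, Finset.mem_sdiff, Finset.mem_filter]
  constructor
  · rintro ⟨⟨h1, h2⟩, h3⟩
    refine ⟨⟨h1, h3⟩, ?_⟩
    cases hcv : c' e
    · rfl
    · exact absurd ⟨h1, hcv⟩ h2
  · rintro ⟨⟨h1, h3⟩, h2⟩
    refine ⟨⟨h1, fun hmem => ?_⟩, h3⟩
    rw [hmem.2] at h2
    cases h2

/-- The 2-way Euler-type split. -/
private lemma split2 (D : Finset ι) (t : ι → A) (hd : ι → B) :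
    ∃ s ⊆ D,
      (∀ a, 2 * ((s.filter (fun e => t e = a)).card) ≤ (D.filter (fun e => t e = a)).card + 1 ∧
        2 * (((D \ s).filter (fun e => t e = a)).card) ≤ (D.filter (fun e => t e = a)).card + 1) ∧
      (∀ b, 2 * ((s.filter (fun e => hd e = b)).card) ≤ (D.filter (fun e => hd e = b)).card + 1 ∧
        2 * (((D \ s).filter (fun e => hd e = b)).card) ≤ (D.filter (fun e => hd e = b)).card + 1) := by
  classical
  obtain ⟨c, hcprop⟩ := exists_alt_coloring
    ((pairInv_involutive D t).toPerm _) ((pairInv_involutive D hd).toPerm _)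
    (fun x => pairInv_involutive D t _) (fun x => pairInv_involutive D hd _)
    (fun x => pairInv_ne D t x) (fun x => pairInv_ne D hd x)
  have hcσ : ∀ x, c (pairInv D t x) = !c x := fun x => (hcprop x).1
  have hcτ : ∀ x, c (pairInv D hd x) = !c x := fun x => (hcprop x).2
  set c' : ι → Bool := fun e => if he : e ∈ D then c (⟨e, he⟩, false) else false with hc'def
  have hc' : ∀ e (he : e ∈ D), c' e = c (⟨e, he⟩, false) := by
    intro e he
    simp only [hc'def, dif_pos he]
  refine ⟨D.filter (fun e => c' e = true), Finset.filter_subset _ _, fun a => ?_, fun b => ?_⟩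
  · have h1 := count_both D t c hcσ a c' hc'
    rw [sfilter_eq D c' t a, dfilter_eq D c' t a]
    have h2 : D.filter (fun e => t e = a) = fiber D t a := rfl
    rw [h2]
    exact h1
  · have h1 := count_both D hd c hcτ b c' hc'
    rw [sfilter_eq D c' hd b, dfilter_eq D c' hd b]
    have h2 : D.filter (fun e => hd e = b) = fiber D hd b := rfl
    rw [h2]
    exact h1

end Counting

section SplitPow

variable {ι A B : Type*} [DecidableEq ι] [DecidableEq A] [DecidableEq B]

private lemma splitPow (t : ι → A) (hd : ι → B) (h : ℕ) (D : Finset ι) :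
    ∃ P : Fin (2 ^ h) → Finset ι,
      (∀ j k, j ≠ k → Disjoint (P j) (P k)) ∧
      (Finset.univ.biUnion P = D) ∧
      (∀ j a, 2 ^ h * ((P j).filter (fun e => t e = a)).card ≤
        (D.filter (fun e => t e = a)).card + (2 ^ h - 1)) ∧
      (∀ j b, 2 ^ h * ((P j).filter (fun e => hd e = b)).card ≤
        (D.filter (fun e => hd e = b)).card + (2 ^ h - 1)) := by
  induction h generalizing D with
  | zero =>
    refine ⟨fun _ => D, ?_, ?_, ?_, ?_⟩
    · intro j k hjk
      exfalso
      apply hjk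
      apply Fin.ext
      have hj := j.isLt
      have hk := k.isLt
      norm_num at hj hk
      omega
    · simp
    · intro j a; simp
    · intro j b; simp
  | succ h ih =>
    obtain ⟨s, hsub, hta, hhb⟩ := split2 D t hd
    obtain ⟨P1, hdj1, hu1, ht1, hh1⟩ := ih s
    obtain ⟨P2, hdj2, hu2, ht2, hh2⟩ := ih (D \ s)
    have hlt2 : ∀ j : Fin (2 ^ (h + 1)), ¬ ((j : ℕ) < 2 ^ h) → (j : ℕ) - 2 ^ h < 2 ^ h := by
      intro j hj
      have h1 := j.isLt
      have hp := pow_succ 2 h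
      omega
    set P : Fin (2 ^ (h + 1)) → Finset ι := fun j =>
      if hj : (j : ℕ) < 2 ^ h then P1 ⟨j, hj⟩ else P2 ⟨(j : ℕ) - 2 ^ h, hlt2 j hj⟩ with hP
    have hP1sub : ∀ i, P1 i ⊆ s := by
      intro i
      rw [← hu1]
      exact Finset.subset_biUnion_of_mem P1 (Finset.mem_univ i)
    have hP2sub : ∀ i, P2 i ⊆ D \ s := by
      intro i
      rw [← hu2]
      exact Finset.subset_biUnion_of_mem P2 (Finset.mem_univ i)
    have hdisjss : Disjoint s (D \ s) := Finset.disjoint_sdiff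
    refine ⟨P, ?_, ?_, ?_, ?_⟩
    · intro j k hjk
      simp only [hP]
      split_ifs with h1 h2 h2
      · apply hdj1
        intro hc
        have hv : (j : ℕ) = (k : ℕ) := congrArg (Fin.val : Fin (2 ^ h) → ℕ) hc
        exact hjk (Fin.ext hv)
      · exact hdisjss.mono (hP1sub _) (hP2sub _)
      · exact hdisjss.symm.mono (hP2sub _) (hP1sub _)
      · apply hdj2
        intro hc
        apply hjk
        have hv : (j : ℕ) - 2 ^ h = (k : ℕ) - 2 ^ h :=
          congrArg (Fin.val : Fin (2 ^ h) → ℕ) hc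
        exact Fin.ext (by omega)
    · ext e
      simp only [Finset.mem_biUnion, Finset.mem_univ, true_and]
      constructor
      · rintro ⟨j, hj⟩
        simp only [hP] at hj
        split_ifs at hj with h1
        · exact hsub (hP1sub _ hj)
        · exact (Finset.mem_sdiff.mp (hP2sub _ hj)).1
      · intro he
        by_cases hes : e ∈ s
        · rw [← hu1] at hes
          obtain ⟨i, -, hi⟩ := Finset.mem_biUnion.mp hes
          have hlt : (i : ℕ) < 2 ^ (h + 1) := by
            have hp := pow_succ 2 h
            have := i.isLt
            omega
          refine ⟨⟨(i : ℕ), hlt⟩, ?_⟩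
          have hPeq : P ⟨(i : ℕ), hlt⟩ = P1 i := by
            simp only [hP]
            rw [dif_pos (show ((⟨(i : ℕ), hlt⟩ : Fin (2 ^ (h + 1))) : ℕ) < 2 ^ h from i.isLt)]
          rw [hPeq]
          exact hi
        · have hesd : e ∈ D \ s := Finset.mem_sdiff.mpr ⟨he, hes⟩
          rw [← hu2] at hesd
          obtain ⟨i, -, hi⟩ := Finset.mem_biUnion.mp hesd
          have hlt : (i : ℕ) + 2 ^ h < 2 ^ (h + 1) := by
            have hp := pow_succ 2 h
            have := i.isLt
            omega
          refine ⟨⟨(i : ℕ) + 2 ^ h, hlt⟩, ?_⟩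
          have hcond : ¬ (((⟨(i : ℕ) + 2 ^ h, hlt⟩ : Fin (2 ^ (h + 1))) : ℕ) < 2 ^ h) := by
            simp
          have hPeq : P ⟨(i : ℕ) + 2 ^ h, hlt⟩ = P2 i := by
            simp only [hP]
            rw [dif_neg hcond]
            exact congrArg P2 (Fin.ext (show (i : ℕ) + 2 ^ h - 2 ^ h = (i : ℕ) by omega))
          rw [hPeq]
          exact hi
    · intro j a
      have hone : (1 : ℕ) ≤ 2 ^ h := Nat.one_le_two_pow
      have hpow2 : (2 : ℕ) ^ (h + 1) = 2 * 2 ^ h := by rw [pow_succ]; ring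
      simp only [hP]
      split_ifs with h1
      · have q1 := ht1 ⟨(j : ℕ), h1⟩ a
        have q2 := (hta a).1
        set x := (Finset.filter (fun e => t e = a) (P1 ⟨(j : ℕ), h1⟩)).card with hxd
        have step : 2 ^ (h + 1) * x = 2 * (2 ^ h * x) := by rw [pow_succ]; ring
        rw [step]
        set z := 2 ^ h * x with hz
        omega
      · have q1 := ht2 ⟨(j : ℕ) - 2 ^ h, hlt2 j h1⟩ a
        have q2 := (hta a).2
        set x := (Finset.filter (fun e => t e = a) (P2 ⟨(j : ℕ) - 2 ^ h, hlt2 j h1⟩)).card with hxd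
        have step : 2 ^ (h + 1) * x = 2 * (2 ^ h * x) := by rw [pow_succ]; ring
        rw [step]
        set z := 2 ^ h * x with hz
        omega
    · intro j b
      have hone : (1 : ℕ) ≤ 2 ^ h := Nat.one_le_two_pow
      have hpow2 : (2 : ℕ) ^ (h + 1) = 2 * 2 ^ h := by rw [pow_succ]; ring
      simp only [hP]
      split_ifs with h1
      · have q1 := hh1 ⟨(j : ℕ), h1⟩ b
        have q2 := (hhb b).1
        set x := (Finset.filter (fun e => hd e = b) (P1 ⟨(j : ℕ), h1⟩)).card with hxd
        have step : 2 ^ (h + 1) * x = 2 * (2 ^ h * x) := by rw [pow_succ]; ring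
        rw [step]
        set z := 2 ^ h * x with hz
        omega
      · have q1 := hh2 ⟨(j : ℕ) - 2 ^ h, hlt2 j h1⟩ b
        have q2 := (hhb b).2
        set x := (Finset.filter (fun e => hd e = b) (P2 ⟨(j : ℕ) - 2 ^ h, hlt2 j h1⟩)).card with hxd
        have step : 2 ^ (h + 1) * x = 2 * (2 ^ h * x) := by rw [pow_succ]; ring
        rw [step]
        set z := 2 ^ h * x with hz
        omega

end SplitPow

section Graph

variable {V : Type*} [Fintype V] [DecidableEq V]

private def inducedSub (G : SimpleGraph V) (S : Finset V) : SimpleGraph V where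
  Adj a b := G.Adj a b ∧ a ∈ S ∧ b ∈ S
  symm := ⟨by rintro a b ⟨h1, h2, h3⟩; exact ⟨h1.symm, h3, h2⟩⟩
  loopless := ⟨by rintro a ⟨h1, -⟩; exact G.loopless.irrefl a h1⟩

private lemma inducedSub_adj {G : SimpleGraph V} {S : Finset V} {a b : V} :
    (inducedSub G S).Adj a b ↔ G.Adj a b ∧ a ∈ S ∧ b ∈ S := Iff.rfl

private lemma low_min_deg (G : SimpleGraph V) [DecidableRel G.Adj] (α : ℕ)
    (hα : 1 ≤ α)
    (harb : ∀ S : Finset V, 2 ≤ S.card →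
      (G.edgeFinset.filter (fun e => ∀ v ∈ e, v ∈ S)).card ≤ α * (S.card - 1))
    (S : Finset V) (hS : S.Nonempty) :
    ∃ v ∈ S, (S.filter (G.Adj v)).card ≤ 2 * α - 1 := by
  classical
  by_contra hcon
  push_neg at hcon
  have hcon' : ∀ v ∈ S, 2 * α ≤ (S.filter (G.Adj v)).card := by
    intro v hv
    have := hcon v hv
    omega
  have hS2 : 2 ≤ S.card := by
    obtain ⟨v, hv⟩ := hS
    have h1 := hcon' v hv
    have h2 : (S.filter (G.Adj v)).card ≤ S.card :=
      Finset.card_le_card (Finset.filter_subset _ _)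
    omega
  letI : DecidableRel (inducedSub G S).Adj := fun a b => instDecidableAnd
  have hdeg : ∀ v ∈ S, (inducedSub G S).degree v = (S.filter (G.Adj v)).card := by
    intro v hv
    rw [← SimpleGraph.card_neighborFinset_eq_degree, SimpleGraph.neighborFinset_eq_filter]
    congr 1
    ext u
    simp only [Finset.mem_filter, Finset.mem_univ, true_and, inducedSub_adj]
    constructor
    · rintro ⟨h1, -, h3⟩; exact ⟨h3, h1⟩
    · rintro ⟨h2, h3⟩; exact ⟨h3, hv, h2⟩
  have hedge : (inducedSub G S).edgeFinset =
      G.edgeFinset.filter (fun e => ∀ v ∈ e, v ∈ S) := by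
    ext e
    refine Sym2.ind (fun a b => ?_) e
    simp only [SimpleGraph.mem_edgeFinset, Finset.mem_filter, SimpleGraph.mem_edgeSet,
      Sym2.ball, inducedSub_adj]
  have hstep1 : S.card * (2 * α) ≤ ∑ v ∈ S, (inducedSub G S).degree v := by
    have h1 : ∀ v ∈ S, 2 * α ≤ (inducedSub G S).degree v := by
      intro v hv
      rw [hdeg v hv]
      exact hcon' v hv
    calc S.card * (2 * α) = S.card • (2 * α) := by simp
      _ ≤ ∑ v ∈ S, (inducedSub G S).degree v := Finset.card_nsmul_le_sum S _ _ h1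
  have hstep2 : ∑ v ∈ S, (inducedSub G S).degree v ≤ ∑ v, (inducedSub G S).degree v :=
    Finset.sum_le_sum_of_subset (S.subset_univ)
  have hstep3 : ∑ v, (inducedSub G S).degree v = 2 * (inducedSub G S).edgeFinset.card :=
    SimpleGraph.sum_degrees_eq_twice_card_edges _
  have hstep4 : ((inducedSub G S).edgeFinset.card) ≤ α * (S.card - 1) := by
    rw [hedge]
    exact harb S hS2
  have hq : α * (S.card - 1) + α = α * S.card := by
    have h1 : S.card - 1 + 1 = S.card := by omega
    calc α * (S.card - 1) + α = α * (S.card - 1 + 1) := by ring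
      _ = α * S.card := by rw [h1]
  have hm : S.card * (2 * α) = 2 * (α * S.card) := by ring
  omega

private lemma exists_elim_list (G : SimpleGraph V) [DecidableRel G.Adj] (α : ℕ)
    (hα : 1 ≤ α)
    (harb : ∀ S : Finset V, 2 ≤ S.card →
      (G.edgeFinset.filter (fun e => ∀ v ∈ e, v ∈ S)).card ≤ α * (S.card - 1)) :
    ∀ (n : ℕ) (S : Finset V), S.card = n → ∃ l : List V, l.Nodup ∧ l.toFinset = S ∧
      ∀ (l1 : List V) (v : V) (l2 : List V), l = l1 ++ v :: l2 →
        ((l2.toFinset).filter (G.Adj v)).card ≤ 2 * α - 1 := by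
  intro n
  induction n with
  | zero =>
    intro S hS
    refine ⟨[], List.nodup_nil, by simpa using (Finset.card_eq_zero.mp hS).symm, ?_⟩
    intro l1 v l2 hdec
    exact absurd hdec.symm (by simp)
  | succ n ih =>
    intro S hS
    have hne : S.Nonempty := by rw [← Finset.card_pos, hS]; omega
    obtain ⟨v, hvS, hvdeg⟩ := low_min_deg G α hα harb S hne
    obtain ⟨l', hnd, htf, hpr⟩ := ih (S.erase v)
      (by rw [Finset.card_erase_of_mem hvS, hS]; omega)
    refine ⟨v :: l', ?_, ?_, ?_⟩
    · rw [List.nodup_cons]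
      refine ⟨fun hc => ?_, hnd⟩
      rw [← List.mem_toFinset, htf] at hc
      exact (Finset.notMem_erase v S) hc
    · rw [List.toFinset_cons, htf, Finset.insert_erase hvS]
    · intro l1 w l2 hdec
      cases l1 with
      | nil =>
        simp only [List.nil_append] at hdec
        injection hdec with h1 h2
        rw [← h1, ← h2]
        calc ((l'.toFinset).filter (G.Adj v)).card
            ≤ (S.filter (G.Adj v)).card := by
              apply Finset.card_le_card
              apply Finset.filter_subset_filter
              rw [htf]
              exact Finset.erase_subset v S
          _ ≤ 2 * α - 1 := hvdeg
      | cons w1 l1' =>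
        rw [List.cons_append] at hdec
        injection hdec with h1 h2
        exact hpr l1' w l2 h2

end Graph

/-- The maximum degree of the spanning subgraph `(V, F)` determined by a set `F` of edges. -/
def maxDegreeOn {V : Type*} [Fintype V] [DecidableEq V] (F : Finset (Sym2 V)) : ℕ :=
  Finset.univ.sup (fun v : V => (F.filter (fun e => v ∈ e)).card)

/-- if `G` has maximum degree `Δ`, arboricity at most `α` and `2^h ≤ α`, then E
can be partitioned into `2^h` parts, each of maximum degree at most `Δ/2^h + 2` and of
arboricity at most `α/2^(h-1) + 1`. -/
theorem partition_maxDegree_and_arboricity_bounds {V : Type*} [Fintype V] [DecidableEq V]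
    (G : SimpleGraph V) [DecidableRel G.Adj] (α : ℕ)
    (harb : ∀ S : Finset V, 2 ≤ S.card →
      (G.edgeFinset.filter (fun e => ∀ v ∈ e, v ∈ S)).card ≤ α * (S.card - 1))
    (h : ℕ) (hh : 2 ^ h ≤ α) :
    ∃ E : Fin (2 ^ h) → Finset (Sym2 V),
      (∀ j k, j ≠ k → Disjoint (E j) (E k)) ∧
      Finset.univ.biUnion E = G.edgeFinset ∧
      ∀ j : Fin (2 ^ h),
        (maxDegreeOn (E j) : ℝ) ≤ (G.maxDegree : ℝ) / 2 ^ h + 2 ∧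
        ∀ S : Finset V, 2 ≤ S.card →
          (((E j).filter (fun e => ∀ v ∈ e, v ∈ S)).card : ℝ) ≤
            ((α : ℝ) / (2 : ℝ) ^ ((h : ℤ) - 1) + 1) * ((S.card : ℝ) - 1) := by
  classical
  have hα1 : 1 ≤ α := le_trans Nat.one_le_two_pow hh
  have hone : (1 : ℕ) ≤ 2 ^ h := Nat.one_le_two_pow
  obtain ⟨l, hnd, htf, hprop⟩ := exists_elim_list G α hα1 harb (Finset.univ.card)
    Finset.univ rfl
  have hmem : ∀ v : V, v ∈ l := by
    intro v
    rw [← List.mem_toFinset, htf]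
    exact Finset.mem_univ v
  set pos : V → ℕ := fun v => l.idxOf v with hpos
  have hposinj : ∀ u v : V, pos u = pos v → u = v := by
    intro u v huv
    exact (List.idxOf_inj (hmem u)).mp huv
  set D : Finset (V × V) :=
    Finset.univ.filter (fun p => G.Adj p.1 p.2 ∧ pos p.1 < pos p.2) with hD
  have hDmem : ∀ p : V × V, p ∈ D ↔ G.Adj p.1 p.2 ∧ pos p.1 < pos p.2 := by
    intro p
    rw [hD, Finset.mem_filter]
    simp
  -- out-degree bound from elimination order
  have houtD : ∀ v : V, (D.filter (fun p => p.1 = v)).card ≤ 2 * α - 1 := by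
    intro v
    have hvl : pos v < l.length := List.idxOf_lt_length_iff.mpr (hmem v)
    have hdec : l = l.take (pos v) ++ v :: l.drop (pos v + 1) := by
      conv_lhs => rw [← List.take_append_drop (pos v) l]
      congr 1
      rw [List.drop_eq_getElem_cons hvl]
      congr 1
      exact List.getElem_idxOf hvl
    have hsub2 : ∀ p ∈ D.filter (fun p => p.1 = v),
        p.2 ∈ (l.drop (pos v + 1)).toFinset.filter (G.Adj v) := by
      intro p hp
      rw [Finset.mem_filter] at hp ⊢
      obtain ⟨hpD, hp1⟩ := hp
      rw [hDmem] at hpD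
      obtain ⟨hadj, hlt⟩ := hpD
      rw [hp1] at hadj hlt
      refine ⟨?_, hadj⟩
      rw [List.mem_toFinset, List.mem_iff_getElem?]
      refine ⟨pos p.2 - (pos v + 1), ?_⟩
      rw [List.getElem?_drop]
      have heq : pos v + 1 + (pos p.2 - (pos v + 1)) = pos p.2 := by omega
      rw [heq]
      rw [List.getElem?_eq_getElem (List.idxOf_lt_length_iff.mpr (hmem p.2))]
      exact congrArg some (List.getElem_idxOf _)
    calc (D.filter (fun p => p.1 = v)).card
        ≤ ((l.drop (pos v + 1)).toFinset.filter (G.Adj v)).card := by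
          apply Finset.card_le_card_of_injOn (fun p => p.2) (fun p hp => hsub2 p hp)
          intro p hp q hq hpq
          rw [Finset.mem_coe, Finset.mem_filter] at hp hq
          exact Prod.ext (hp.2.trans hq.2.symm) hpq
      _ ≤ 2 * α - 1 := hprop (l.take (pos v)) v (l.drop (pos v + 1)) hdec
  -- in + out degrees equal G-degree
  have hdegsplit : ∀ v : V, (D.filter (fun p => p.1 = v)).card +
      (D.filter (fun p => p.2 = v)).card = G.degree v := by
    intro v
    have h1 : (D.filter (fun p => p.1 = v)).card =
        (Finset.univ.filter (fun u => G.Adj v u ∧ pos v < pos u)).card := by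
      apply Finset.card_bij (fun p _ => p.2)
      · intro p hp
        rw [Finset.mem_filter] at hp
        obtain ⟨hpD, hp1⟩ := hp
        rw [hDmem] at hpD
        obtain ⟨h2, h3⟩ := hpD
        rw [hp1] at h2 h3
        rw [Finset.mem_filter]
        exact ⟨Finset.mem_univ _, h2, h3⟩
      · intro p hp q hq hpq
        rw [Finset.mem_filter] at hp hq
        exact Prod.ext (hp.2.trans hq.2.symm) hpq
      · intro u hu
        rw [Finset.mem_filter] at hu
        refine ⟨(v, u), ?_, rfl⟩
        rw [Finset.mem_filter, hDmem]
        exact ⟨⟨hu.2.1, hu.2.2⟩, rfl⟩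
    have h2 : (D.filter (fun p => p.2 = v)).card =
        (Finset.univ.filter (fun u => G.Adj v u ∧ pos u < pos v)).card := by
      apply Finset.card_bij (fun p _ => p.1)
      · intro p hp
        rw [Finset.mem_filter] at hp
        obtain ⟨hpD, hp1⟩ := hp
        rw [hDmem] at hpD
        obtain ⟨h2, h3⟩ := hpD
        rw [hp1] at h2 h3
        rw [Finset.mem_filter]
        exact ⟨Finset.mem_univ _, h2.symm, h3⟩
      · intro p hp q hq hpq
        rw [Finset.mem_filter] at hp hq
        exact Prod.ext hpq (hp.2.trans hq.2.symm)
      · intro u hu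
        rw [Finset.mem_filter] at hu
        refine ⟨(u, v), ?_, rfl⟩
        rw [Finset.mem_filter, hDmem]
        exact ⟨⟨hu.2.1.symm, hu.2.2⟩, rfl⟩
    have h4 : Disjoint (Finset.univ.filter (fun u => G.Adj v u ∧ pos v < pos u))
        (Finset.univ.filter (fun u => G.Adj v u ∧ pos u < pos v)) := by
      rw [Finset.disjoint_left]
      intro u hu1 hu2
      rw [Finset.mem_filter] at hu1 hu2
      omega
    have h3 : (Finset.univ.filter (fun u => G.Adj v u ∧ pos v < pos u)) ∪
        (Finset.univ.filter (fun u => G.Adj v u ∧ pos u < pos v)) =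
        Finset.univ.filter (fun u => G.Adj v u) := by
      ext u
      simp only [Finset.mem_union, Finset.mem_filter, Finset.mem_univ, true_and]
      constructor
      · rintro (⟨ha, -⟩ | ⟨ha, -⟩) <;> exact ha
      · intro ha
        have hne : pos u ≠ pos v := fun hc => (G.ne_of_adj ha) (hposinj _ _ hc.symm)
        rcases Nat.lt_or_ge (pos v) (pos u) with hlt | hge
        · exact Or.inl ⟨ha, hlt⟩
        · exact Or.inr ⟨ha, by omega⟩
    rw [h1, h2, ← Finset.card_union_of_disjoint h4, h3,
      ← SimpleGraph.card_neighborFinset_eq_degree, SimpleGraph.neighborFinset_eq_filter]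
  -- split D into 2^h parts
  obtain ⟨P, hdisj, hunion, htail, hhead⟩ :=
    splitPow (fun p : V × V => p.1) (fun p : V × V => p.2) h D
  have hPsub : ∀ j, P j ⊆ D := fun j =>
    hunion ▸ Finset.subset_biUnion_of_mem P (Finset.mem_univ j)
  have hinjOn : ∀ (T : Finset (V × V)), T ⊆ D →
      Set.InjOn (fun p : V × V => s(p.1, p.2)) T := by
    intro T hT p hp q hq hpq
    simp only at hpq
    rw [Sym2.eq_iff] at hpq
    have hp' := (hDmem p).mp (hT hp)
    have hq' := (hDmem q).mp (hT hq)
    rcases hpq with ⟨h1, h2⟩ | ⟨h1, h2⟩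
    · exact Prod.ext h1 h2
    · exfalso
      rw [h1, h2] at hp'
      omega
  refine ⟨fun j => (P j).image (fun p => s(p.1, p.2)), ?_, ?_, ?_⟩
  · -- disjointness
    intro j k hjk
    rw [Finset.disjoint_left]
    intro e hej hek
    rw [Finset.mem_image] at hej hek
    obtain ⟨p, hp, rfl⟩ := hej
    obtain ⟨q, hq, hqe⟩ := hek
    have hqp : q = p := hinjOn D (fun x hx => hx) (hPsub k hq) (hPsub j hp) hqe
    exact (Finset.disjoint_left.mp (hdisj j k hjk)) hp (hqp ▸ hq)
  · -- union
    rw [← Finset.biUnion_image, hunion]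
    ext e
    refine Sym2.ind (fun a b => ?_) e
    rw [Finset.mem_image, SimpleGraph.mem_edgeFinset, SimpleGraph.mem_edgeSet]
    constructor
    · rintro ⟨p, hp, hpe⟩
      have hp' := (hDmem p).mp hp
      rw [Sym2.eq_iff] at hpe
      rcases hpe with ⟨h1, h2⟩ | ⟨h1, h2⟩
      · rw [← h1, ← h2]; exact hp'.1
      · rw [← h1, ← h2]; exact hp'.1.symm
    · intro hab
      have hne : pos a ≠ pos b := fun hc => G.ne_of_adj hab (hposinj _ _ hc)
      rcases Nat.lt_or_ge (pos a) (pos b) with hlt | hge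
      · exact ⟨(a, b), (hDmem _).mpr ⟨hab, hlt⟩, rfl⟩
      · exact ⟨(b, a), (hDmem _).mpr ⟨hab.symm, show pos b < pos a by omega⟩, Sym2.eq_swap⟩
  · -- per-part bounds
    intro j
    have hpow0 : (0 : ℝ) < (2 : ℝ) ^ h := by positivity
    constructor
    · -- max degree bound
      have hgen : ∀ v : V,
          2 ^ h * ((((P j).image (fun p => s(p.1, p.2))).filter (fun e => v ∈ e)).card)
          ≤ G.maxDegree + 2 * 2 ^ h := by
        intro v
        have himg : (((P j).image (fun p => s(p.1, p.2))).filter (fun e => v ∈ e))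
            = ((P j).filter (fun p => v ∈ s(p.1, p.2))).image (fun p => s(p.1, p.2)) :=
          Finset.filter_image
        have hcard : ((((P j).filter (fun p => v ∈ s(p.1, p.2)))).image
            (fun p => s(p.1, p.2))).card
            = ((P j).filter (fun p => v ∈ s(p.1, p.2))).card :=
          Finset.card_image_of_injOn
            (hinjOn _ ((Finset.filter_subset _ _).trans (hPsub j)))
        have hsplitf : (P j).filter (fun p => v ∈ s(p.1, p.2)) =
            (P j).filter (fun p => p.1 = v) ∪ (P j).filter (fun p => p.2 = v) := by
          rw [← Finset.filter_or]
          apply Finset.filter_congr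
          intro p hp
          rw [Sym2.mem_iff]
          constructor
          · rintro (h1 | h1)
            · exact Or.inl h1.symm
            · exact Or.inr h1.symm
          · rintro (h1 | h1)
            · exact Or.inl h1.symm
            · exact Or.inr h1.symm
        have hdisj2 : Disjoint ((P j).filter (fun p => p.1 = v))
            ((P j).filter (fun p => p.2 = v)) := by
          rw [Finset.disjoint_left]
          intro p hp1 hp2
          rw [Finset.mem_filter] at hp1 hp2
          have hpD := (hDmem p).mp (hPsub j hp1.1)
          rw [hp1.2, hp2.2] at hpD
          exact (G.loopless.irrefl v) hpD.1
        rw [himg, hcard, hsplitf, Finset.card_union_of_disjoint hdisj2]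
        have q1 := htail j v
        have q2 := hhead j v
        have q3 := houtD v
        have q4 := hdegsplit v
        have q5 : G.degree v ≤ G.maxDegree := G.degree_le_maxDegree v
        have hexp : 2 ^ h * (((P j).filter (fun p => p.1 = v)).card +
            ((P j).filter (fun p => p.2 = v)).card) =
            2 ^ h * ((P j).filter (fun p => p.1 = v)).card +
            2 ^ h * ((P j).filter (fun p => p.2 = v)).card := by ring
        rw [hexp]
        set z1 := 2 ^ h * ((P j).filter (fun p => p.1 = v)).card with hz1
        set z2 := 2 ^ h * ((P j).filter (fun p => p.2 = v)).card with hz2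
        omega
      -- pass to the sup and realify
      rcases isEmpty_or_nonempty V with hV | hV
      · have : maxDegreeOn ((P j).image (fun p => s(p.1, p.2))) = 0 := by
          rw [maxDegreeOn]
          simp [Finset.univ_eq_empty]
        rw [this]
        have : (0 : ℝ) ≤ (G.maxDegree : ℝ) / 2 ^ h := by positivity
        push_cast
        linarith
      · obtain ⟨v0, -, hv0⟩ := Finset.exists_mem_eq_sup Finset.univ Finset.univ_nonempty
          (fun v : V => ((((P j).image (fun p => s(p.1, p.2))).filter
            (fun e => v ∈ e)).card))
        have hMD : maxDegreeOn ((P j).image (fun p => s(p.1, p.2))) =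
            ((((P j).image (fun p => s(p.1, p.2))).filter (fun e => v0 ∈ e)).card) := by
          rw [maxDegreeOn, hv0]
        rw [hMD]
        have hnat := hgen v0
        have hreal : ((2 : ℝ) ^ h) * ((((P j).image (fun p => s(p.1, p.2))).filter
            (fun e => v0 ∈ e)).card : ℝ) ≤ (G.maxDegree : ℝ) + 2 * 2 ^ h := by
          exact_mod_cast hnat
        rw [div_add' _ _ _ (ne_of_gt hpow0), le_div_iff₀ hpow0]
        linarith
    · -- arboricity bound
      intro S hS2
      have himg : (((P j).image (fun p => s(p.1, p.2))).filter (fun e => ∀ v ∈ e, v ∈ S))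
          = ((P j).filter (fun p => p.1 ∈ S ∧ p.2 ∈ S)).image (fun p => s(p.1, p.2)) := by
        rw [Finset.filter_image]
        congr 1
        apply Finset.filter_congr
        intro p hp
        rw [Sym2.ball]
      have hcard : (((P j).filter (fun p => p.1 ∈ S ∧ p.2 ∈ S)).image
          (fun p => s(p.1, p.2))).card = ((P j).filter (fun p => p.1 ∈ S ∧ p.2 ∈ S)).card :=
        Finset.card_image_of_injOn (hinjOn _ ((Finset.filter_subset _ _).trans (hPsub j)))
      have hSne : S.Nonempty := Finset.card_pos.mp (by omega)
      obtain ⟨vm, hvmS, hvmax⟩ := Finset.exists_max_image S pos hSne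
      have hsubB : (P j).filter (fun p => p.1 ∈ S ∧ p.2 ∈ S) ⊆
          (S.erase vm).biUnion (fun v => (P j).filter (fun p => p.1 = v)) := by
        intro p hp
        rw [Finset.mem_filter] at hp
        obtain ⟨hpj, hp1S, hp2S⟩ := hp
        have hpD := (hDmem p).mp (hPsub j hpj)
        rw [Finset.mem_biUnion]
        refine ⟨p.1, ?_, ?_⟩
        · rw [Finset.mem_erase]
          refine ⟨fun hc => ?_, hp1S⟩
          have hm2 := hvmax p.2 hp2S
          rw [hc] at hpD
          omega
        · rw [Finset.mem_filter]
          exact ⟨hpj, rfl⟩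
      have hcount : ((P j).filter (fun p => p.1 ∈ S ∧ p.2 ∈ S)).card ≤
          ∑ v ∈ S.erase vm, ((P j).filter (fun p => p.1 = v)).card :=
        le_trans (Finset.card_le_card hsubB) Finset.card_biUnion_le
      have hbound : 2 ^ h * ((P j).filter (fun p => p.1 ∈ S ∧ p.2 ∈ S)).card ≤
          (S.card - 1) * (2 * α + 2 ^ h) := by
        calc 2 ^ h * ((P j).filter (fun p => p.1 ∈ S ∧ p.2 ∈ S)).card
            ≤ 2 ^ h * ∑ v ∈ S.erase vm, ((P j).filter (fun p => p.1 = v)).card :=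
              Nat.mul_le_mul_left _ hcount
          _ = ∑ v ∈ S.erase vm, 2 ^ h * ((P j).filter (fun p => p.1 = v)).card :=
              Finset.mul_sum _ _ _
          _ ≤ ∑ v ∈ S.erase vm, (2 * α + 2 ^ h) := by
              apply Finset.sum_le_sum
              intro v hv
              have q1 := htail j v
              have q3 := houtD v
              set z := 2 ^ h * ((P j).filter (fun p => p.1 = v)).card with hz
              omega
          _ = (S.card - 1) * (2 * α + 2 ^ h) := by
              rw [Finset.sum_const, smul_eq_mul, Finset.card_erase_of_mem hvmS]
      -- realify
      rw [himg, hcard]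
      have hz : (2 : ℝ) ^ ((h : ℤ) - 1) = 2 ^ h / 2 := by
        rw [zpow_sub₀ (by norm_num : (2 : ℝ) ≠ 0), zpow_one, zpow_natCast]
      have hcoeff : (α : ℝ) / (2 : ℝ) ^ ((h : ℤ) - 1) + 1 =
          (2 * α + 2 ^ h) / 2 ^ h := by
        rw [hz]
        field_simp
      rw [hcoeff]
      have hc1 : ((S.card : ℝ) - 1) = ((S.card - 1 : ℕ) : ℝ) := by
        rw [Nat.cast_sub (by omega)]
        simp
      rw [hc1]
      have hcast : ((2 : ℝ) ^ h) * (((P j).filter (fun p => p.1 ∈ S ∧ p.2 ∈ S)).card : ℝ) ≤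
          ((S.card - 1 : ℕ) : ℝ) * (2 * α + 2 ^ h) := by
        exact_mod_cast hbound
      rw [div_mul_eq_mul_div, le_div_iff₀ hpow0]
      nlinarith [hcast]
end
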